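/- Let q be a prime power and V = F_q², let SL(2,q) be the group of linear automorphisms of V of determinant 1, and let e₁ = (1,0). Let G_0 be a subgroup of ΓL(2,q) containing SL(2,q) as a normal subgroup. Suppose P is a nontrivial imprimitive block for the action of G_0 on V ∖ {0} with e₁ ∈ P. Then P ⊆ {a·e₁ : a ∈ F_q} and the set {a ∈ F_q^× : a·e₁ ∈ P} is a subgroup of the multiplicative group F_q^×. -/

import Mathlib

/-- The permutation of `Fin 2 → F` induced by a determinant-one matrix. -/
noncomputable def stmt18PermOfMat {F : Type*} [Field F] (A : Matrix (Fin 2) (Fin 2) F)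
    (hA : A.det = 1) : Equiv.Perm (Fin 2 → F) where
  toFun v := A.mulVec v
  invFun v := A⁻¹.mulVec v
  left_inv v := by
    show A⁻¹.mulVec (A.mulVec v) = v
    rw [Matrix.mulVec_mulVec, Matrix.nonsing_inv_mul _ (by simp [hA]), Matrix.one_mulVec]
  right_inv v := by
    show A.mulVec (A⁻¹.mulVec v) = v
    rw [Matrix.mulVec_mulVec, Matrix.mul_nonsing_inv _ (by simp [hA]), Matrix.one_mulVec]

lemma stmt18_mulVec_fin_two {F : Type*} [Field F] (a b c d : F) (x : Fin 2 → F) :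
    (Matrix.of ![![a, b], ![c, d]]).mulVec x = ![a * x 0 + b * x 1, c * x 0 + d * x 1] := by
  funext i
  fin_cases i <;>
    simp [Matrix.mulVec, dotProduct, Fin.sum_univ_two]

/-- Lemma 4.8 (part (a)): let q be a prime power, V = F_q², and let G₀ ≤ ΓL(2,q)
contain SL(2,q) as a normal subgroup. If P is a nontrivial imprimitive block of G₀
on V ∖ {0} containing e₁ = (1,0), then P ⊆ ⟨e₁⟩ and {a ∈ F_q^× : a·e₁ ∈ P} is a
subgroup of F_q^×. -/
theorem stmt_18 {F : Type*} [Field F] [Fintype F]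
    (G₀ : Subgroup (Equiv.Perm (Fin 2 → F)))
    -- G₀ ≤ ΓL(2,q): every element of G₀ is an additive semilinear bijection
    (hGammaL : ∀ g ∈ G₀, (∀ u v, g (u + v) = g u + g v) ∧
        ∃ σ : F ≃+* F, ∀ (c : F) (u), g (c • u) = σ c • g u)
    -- SL(2,q) ⊆ G₀
    (hSL_sub : ∀ g : Equiv.Perm (Fin 2 → F),
        (∃ A : Matrix (Fin 2) (Fin 2) F, A.det = 1 ∧ ∀ v, g v = A.mulVec v) → g ∈ G₀)
    -- SL(2,q) is normal in G₀
    (hSL_normal : ∀ g ∈ G₀, ∀ h : Equiv.Perm (Fin 2 → F),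
        (∃ A : Matrix (Fin 2) (Fin 2) F, A.det = 1 ∧ ∀ v, h v = A.mulVec v) →
        ∃ A' : Matrix (Fin 2) (Fin 2) F, A'.det = 1 ∧ ∀ v, (g * h * g⁻¹) v = A'.mulVec v)
    (P : Set (Fin 2 → F))
    (hP0 : ∀ v ∈ P, v ≠ 0)
    (hPe : (fun i : Fin 2 => if (i : ℕ) = 0 then (1 : F) else 0) ∈ P)
    (hPlarge : 1 < P.ncard)
    (hPsmall : P.ncard < Fintype.card (Fin 2 → F) - 1)
    (hPblock : ∀ g ∈ G₀, ⇑g '' P = P ∨ (⇑g '' P) ∩ P = ∅) :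
    (P ⊆ {v | ∃ a : F, v = a • fun i : Fin 2 => if (i : ℕ) = 0 then (1 : F) else 0}) ∧
    ∃ U : Subgroup Fˣ, ∀ a : Fˣ,
      ((a : F) • (fun i : Fin 2 => if (i : ℕ) = 0 then (1 : F) else 0) ∈ P ↔ a ∈ U) := by
  have hE : (fun i : Fin 2 => if (i : ℕ) = 0 then (1 : F) else 0) = ![1, 0] := by
    funext i; fin_cases i <;> simp
  have hPe' : (![1, 0] : Fin 2 → F) ∈ P := hE ▸ hPe
  -- Key: any det-1 matrix mapping some point of P into P maps all of P into P
  have key : ∀ (A : Matrix (Fin 2) (Fin 2) F), A.det = 1 →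
      ∀ p ∈ P, A.mulVec p ∈ P → ∀ x ∈ P, A.mulVec x ∈ P := by
    intro A hA p hp hAp x hx
    have hg : stmt18PermOfMat A hA ∈ G₀ := hSL_sub _ ⟨A, hA, fun v => rfl⟩
    rcases hPblock _ hg with h | h
    · have : A.mulVec x ∈ (⇑(stmt18PermOfMat A hA)) '' P := ⟨x, hx, rfl⟩
      rwa [h] at this
    · exfalso
      have : A.mulVec p ∈ (⇑(stmt18PermOfMat A hA) '' P) ∩ P := ⟨⟨p, hp, rfl⟩, hAp⟩
      rw [h] at this
      exact this
  -- smul computation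
  have hsmul : ∀ c : F,
      (c • fun i : Fin 2 => if (i : ℕ) = 0 then (1 : F) else 0) = ![c, 0] := by
    intro c; funext i; fin_cases i <;> simp
  -- Every element of P lies on the line spanned by e₁
  have hline : ∀ v ∈ P, v 1 = 0 := by
    by_contra hcon
    push_neg at hcon
    obtain ⟨v, hv, hv1⟩ := hcon
    -- upper transvections preserve P
    have upper : ∀ b : F, ∀ x ∈ P, (Matrix.of ![![1, b], ![0, 1]]).mulVec x ∈ P := by
      intro b x hx
      refine key _ (by simp [Matrix.det_fin_two_of]) ![1, 0] hPe' ?_ x hx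
      rw [stmt18_mulVec_fin_two]
      simpa using hPe'
    -- all points with second coordinate v 1
    have row : ∀ t : F, (![t, v 1] : Fin 2 → F) ∈ P := by
      intro t
      have := upper ((t - v 0) / v 1) v hv
      rw [stmt18_mulVec_fin_two] at this
      have hvv : v = ![v 0, v 1] := by funext i; fin_cases i <;> simp
      convert this using 2 <;> field_simp <;> simp <;> ring
    -- lower transvections preserve P
    have lower : ∀ c : F, ∀ x ∈ P, (Matrix.of ![![1, 0], ![c, 1]]).mulVec x ∈ P := by
      intro c x hx
      refine key _ (by simp [Matrix.det_fin_two_of]) ![0, v 1] (row 0) ?_ x hx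
      rw [stmt18_mulVec_fin_two]
      simpa using row 0
    have col : ∀ c : F, (![1, c] : Fin 2 → F) ∈ P := by
      intro c
      have := lower c ![1, 0] hPe'
      rw [stmt18_mulVec_fin_two] at this
      simpa using this
    -- all points off the axis
    have allOff : ∀ t c : F, c ≠ 0 → (![t, c] : Fin 2 → F) ∈ P := by
      intro t c hc
      have hup : ∀ b : F, ∀ x ∈ P, (Matrix.of ![![1, b], ![0, 1]]).mulVec x ∈ P := upper
      have := hup ((t - 1) / c) ![1, c] (col c)
      rw [stmt18_mulVec_fin_two] at this
      convert this using 2 <;> field_simp <;> simp <;> ring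
    -- points on the axis
    have axis : ∀ t : F, t ≠ 0 → (![t, 0] : Fin 2 → F) ∈ P := by
      intro t ht
      have hdet : (Matrix.of ![![t, 0], ![0, t⁻¹]]).det = 1 := by
        simp [Matrix.det_fin_two_of, mul_inv_cancel₀ ht]
      have h1 : (Matrix.of ![![t, 0], ![0, t⁻¹]]).mulVec ![1, 1] ∈ P := by
        rw [stmt18_mulVec_fin_two]
        simpa using allOff t t⁻¹ (inv_ne_zero ht)
      have := key _ hdet ![1, 1] (allOff 1 1 one_ne_zero) h1 ![1, 0] hPe'
      rw [stmt18_mulVec_fin_two] at this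
      simpa using this
    -- hence P contains all nonzero vectors
    have hall : ∀ w : Fin 2 → F, w ≠ 0 → w ∈ P := by
      intro w hw
      have hww : w = ![w 0, w 1] := by funext i; fin_cases i <;> simp
      by_cases h1 : w 1 = 0
      · have h0 : w 0 ≠ 0 := by
          intro h0
          apply hw
          funext i; fin_cases i <;> simp [h0, h1]
        rw [hww, h1]; exact axis _ h0
      · rw [hww]; exact allOff _ _ h1
    -- contradiction with hPsmall
    have hsub : ({0}ᶜ : Set (Fin 2 → F)) ⊆ P := fun w hw => hall w hw
    have hcard : ({0}ᶜ : Set (Fin 2 → F)).ncard = Fintype.card (Fin 2 → F) - 1 := by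
      have h1 : ({0} : Set (Fin 2 → F)).ncard + ({0}ᶜ : Set (Fin 2 → F)).ncard
          = Nat.card (Fin 2 → F) := Set.ncard_add_ncard_compl _
      have h2 : ({0} : Set (Fin 2 → F)).ncard = 1 := Set.ncard_singleton _
      rw [Nat.card_eq_fintype_card] at h1
      omega
    have := Set.ncard_le_ncard hsub (Set.toFinite _)
    omega
  constructor
  · intro v hv
    refine ⟨v 0, ?_⟩
    rw [hsmul]
    funext i; fin_cases i <;> simp [hline v hv]
  · have hcar : ∀ s : Set Fˣ, s = {a : Fˣ | (a : F) • (fun i : Fin 2 =>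
        if (i : ℕ) = 0 then (1 : F) else 0) ∈ P} → (1 : Fˣ) ∈ s ∧
        (∀ a b : Fˣ, a ∈ s → b ∈ s → a * b ∈ s) ∧ (∀ a : Fˣ, a ∈ s → a⁻¹ ∈ s) := by
      rintro s rfl
      refine ⟨by simpa using hPe, ?_, ?_⟩
      · rintro a b ha hb
        simp only [Set.mem_setOf_eq, hsmul] at ha hb ⊢
        have hdet : (Matrix.of ![![(a : F), 0], ![0, (a : F)⁻¹]]).det = 1 := by
          simp [Matrix.det_fin_two_of, mul_inv_cancel₀ a.ne_zero]
        have h1 : (Matrix.of ![![(a : F), 0], ![0, (a : F)⁻¹]]).mulVec ![1, 0] ∈ P := by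
          rw [stmt18_mulVec_fin_two]; simpa using ha
        have := key _ hdet ![1, 0] hPe' h1 ![(b : F), 0] hb
        rw [stmt18_mulVec_fin_two] at this
        simpa using this
      · intro a ha
        simp only [Set.mem_setOf_eq, hsmul] at ha ⊢
        have hdet : (Matrix.of ![![(a : F)⁻¹, 0], ![0, (a : F)]]).det = 1 := by
          simp [Matrix.det_fin_two_of, inv_mul_cancel₀ a.ne_zero]
        have h1 : (Matrix.of ![![(a : F)⁻¹, 0], ![0, (a : F)]]).mulVec ![(a : F), 0] ∈ P := by
          rw [stmt18_mulVec_fin_two]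
          simpa [inv_mul_cancel₀ a.ne_zero] using hPe'
        have := key _ hdet ![(a : F), 0] ha h1 ![1, 0] hPe'
        rw [stmt18_mulVec_fin_two] at this
        simpa using this
    obtain ⟨h1m, hmm, him⟩ := hcar _ rfl
    exact ⟨{ carrier := {a : Fˣ | (a : F) • (fun i : Fin 2 =>
          if (i : ℕ) = 0 then (1 : F) else 0) ∈ P}
             one_mem' := h1m
             mul_mem' := fun {a b} ha hb => hmm a b ha hb
             inv_mem' := fun {a} ha => him a ha }, fun a => Iff.rfl⟩
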